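/- Let C_1, C_2, C_3, C_4 be circulant ±1-matrices of order v whose associated first-row sequences have periodic autocorrelation functions summing to zero at every nonzero shift, and let R be the back-circulant identity matrix (R_{ij} = 1 iff i + j ≡ v - 1 mod v, with 0-based indexing). Then the 4v × 4v block matrix H with rows of blocks [C_1, C_2R, C_3R, C_4R; -C_2R, C_1, -RC_4, RC_3; -C_3R, RC_4, C_1, -RC_2; -C_4R, -RC_3, RC_2, C_1] satisfies H H^T = 4v I_{4v}. -/
import Mathlib
open Matrix
set_option linter.unusedSectionVars false
set_option maxHeartbeats 1000000

namespace GS12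
variable {v : ℕ} [NeZero v]

def circ (f : ZMod v → ℤ) : Matrix (ZMod v) (ZMod v) ℤ := of fun i k => f (k - i)

@[simp] lemma circ_apply (f : ZMod v → ℤ) (i k : ZMod v) : circ f i k = f (k - i) := rfl

def cnv (f g : ZMod v → ℤ) : ZMod v → ℤ := fun s => ∑ m, f m * g (s - m)

def rev (f : ZMod v → ℤ) : ZMod v → ℤ := fun s => f (-s)

lemma rev_rev (f : ZMod v → ℤ) : rev (rev f) = f := funext fun s => by simp [rev]

lemma cnv_comm (f g : ZMod v → ℤ) : cnv f g = cnv g f := by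
  funext s
  simp only [cnv]
  refine Fintype.sum_equiv (Equiv.subLeft s) _ _ (fun m => ?_)
  simp only [Equiv.subLeft_apply, sub_sub_cancel]
  ring

lemma rev_cnv (f g : ZMod v → ℤ) : rev (cnv f g) = cnv (rev f) (rev g) := by
  funext s
  simp only [rev, cnv]
  refine Fintype.sum_equiv (Equiv.neg (ZMod v)) _ _ (fun m => ?_)
  simp only [Equiv.neg_apply, neg_neg]
  congr 1
  ring

lemma circ_mul (f g : ZMod v → ℤ) : circ f * circ g = circ (cnv f g) := by
  ext i k
  simp only [mul_apply, circ_apply, cnv]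
  refine Fintype.sum_equiv (Equiv.subRight i) _ _ (fun m => ?_)
  simp only [Equiv.subRight_apply]
  congr 1
  ring

lemma circ_mul' (f g : ZMod v → ℤ) (X : Matrix (ZMod v) (ZMod v) ℤ) :
    circ f * (circ g * X) = circ (cnv f g) * X := by
  rw [← mul_assoc, circ_mul]

lemma transpose_circ (f : ZMod v → ℤ) : (circ f)ᵀ = circ (rev f) := by
  ext i k
  simp [rev, neg_sub]

lemma sum_ite (c : ZMod v) (f : ZMod v → ℤ) :
    (∑ j, if c + j = -1 then f j else 0) = f (-1 - c) := by
  have h : ∀ j : ZMod v, (c + j = -1) ↔ (j = -1 - c) := fun j => by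
    constructor <;> intro h <;> linear_combination h
  simp only [h]
  simp [Finset.sum_ite_eq' Finset.univ]

section
variable (R : Matrix (ZMod v) (ZMod v) ℤ) (hR : ∀ i j, R i j = if i + j = -1 then 1 else 0)
include hR

lemma Rt : Rᵀ = R := by
  ext i k
  simp [hR, add_comm]

lemma RR : R * R = 1 := by
  ext i k
  simp only [mul_apply, hR, one_apply, ite_mul, one_mul, zero_mul]
  rw [sum_ite]
  congr 1
  exact propext ⟨fun h => by linear_combination -h, fun h => by linear_combination -h⟩

lemma RR' (X : Matrix (ZMod v) (ZMod v) ℤ) : R * (R * X) = X := by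
  rw [← mul_assoc, RR R hR, one_mul]

lemma R_mul_circ (f : ZMod v → ℤ) : R * circ f = circ (rev f) * R := by
  ext i k
  simp only [mul_apply, hR, circ_apply, rev, ite_mul, mul_ite, one_mul, mul_one,
    zero_mul, mul_zero]
  rw [sum_ite i fun j => f (k - j)]
  have h2 : (∑ j, if j + k = -1 then f (-(j - i)) else 0) = f (-((-1 - k) - i)) := by
    have hc : ∀ j : ZMod v, ((j + k = -1) : Prop) = (k + j = -1) := fun j => by rw [add_comm]
    simp only [hc]
    exact sum_ite k _
  rw [h2]
  congr 1
  ring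

lemma R_mul_circ' (f : ZMod v → ℤ) (X : Matrix (ZMod v) (ZMod v) ℤ) :
    R * (circ f * X) = circ (rev f) * (R * X) := by
  rw [← mul_assoc, R_mul_circ R hR, mul_assoc]

end
end GS12

open GS12

/-- The Goethals–Seidel array built from four circulant `±1`-matrices whose
periodic autocorrelations sum to zero yields a Hadamard matrix: `H Hᵀ = 4v I`. -/
theorem stmt12 (v : ℕ) [NeZero v] (a : Fin 4 → ZMod v → ℤ)
    (hpm : ∀ j i, a j i = 1 ∨ a j i = -1)
    (hpaf : ∀ s : ZMod v, s ≠ 0 → ∑ j : Fin 4, ∑ i : ZMod v, a j i * a j (i + s) = 0)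
    (C : Fin 4 → Matrix (ZMod v) (ZMod v) ℤ)
    (hC : ∀ j i k, C j i k = a j (k - i))
    (R : Matrix (ZMod v) (ZMod v) ℤ)
    (hR : ∀ i j, R i j = if i + j = -1 then 1 else 0)
    (H : Matrix (Fin 4 × ZMod v) (Fin 4 × ZMod v) ℤ)
    (hH : ∀ p q : Fin 4 × ZMod v, H p q =
      (![![C 0, C 1 * R, C 2 * R, C 3 * R],
         ![-(C 1 * R), C 0, -(R * C 3), R * C 2],
         ![-(C 2 * R), R * C 3, C 0, -(R * C 1)],
         ![-(C 3 * R), -(R * C 2), R * C 1, C 0]] p.1 q.1) p.2 q.2) :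
    H * H.transpose = (4 * (v : ℤ)) • (1 : Matrix (Fin 4 × ZMod v) (Fin 4 × ZMod v) ℤ) := by
  have hC' : ∀ j, C j = circ (a j) := fun j => by
    ext i k; simp [circ, hC]
  -- the diagonal sum
  have diag : circ (cnv (a 0) (rev (a 0))) + circ (cnv (a 1) (rev (a 1)))
      + circ (cnv (a 2) (rev (a 2))) + circ (cnv (a 3) (rev (a 3)))
      = (4 * (v : ℤ)) • (1 : Matrix (ZMod v) (ZMod v) ℤ) := by
    ext i k
    have key : (∑ j : Fin 4, cnv (a j) (rev (a j)) (k - i))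
        = if i = k then 4 * (v : ℤ) else 0 := by
      by_cases h : i = k
      · subst h
        rw [if_pos rfl, sub_self]
        simp only [cnv, rev]
        have hone : ∀ j : Fin 4, (∑ m : ZMod v, a j m * a j (-(0 - m))) = (v : ℤ) := by
          intro j
          have e : ∀ m : ZMod v, a j m * a j (-(0 - m)) = 1 := fun m => by
            rcases hpm j m with h1 | h1 <;> simp [h1]
          rw [Finset.sum_congr rfl fun m _ => e m]
          simp [Finset.card_univ, ZMod.card]
        rw [Fin.sum_univ_four, hone 0, hone 1, hone 2, hone 3]
        ring
      · have hs : i - k ≠ 0 := sub_ne_zero.mpr h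
        rw [if_neg h, ← hpaf (i - k) hs]
        refine Finset.sum_congr rfl (fun j _ => ?_)
        simp only [cnv, rev]
        refine Finset.sum_congr rfl (fun m _ => ?_)
        congr 1
        ring
    have lhs : (circ (cnv (a 0) (rev (a 0))) + circ (cnv (a 1) (rev (a 1)))
        + circ (cnv (a 2) (rev (a 2))) + circ (cnv (a 3) (rev (a 3)))) i k
        = ∑ j : Fin 4, cnv (a j) (rev (a j)) (k - i) := by
      simp [Fin.sum_univ_four]
    rw [lhs, key]
    simp [one_apply]
  set M : Fin 4 → Fin 4 → Matrix (ZMod v) (ZMod v) ℤ :=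
    ![![C 0, C 1 * R, C 2 * R, C 3 * R],
      ![-(C 1 * R), C 0, -(R * C 3), R * C 2],
      ![-(C 2 * R), R * C 3, C 0, -(R * C 1)],
      ![-(C 3 * R), -(R * C 2), R * C 1, C 0]] with hM
  have key : ∀ x y : Fin 4, (∑ c : Fin 4, M x c * (M y c)ᵀ)
      = if x = y then (4 * (v : ℤ)) • (1 : Matrix (ZMod v) (ZMod v) ℤ) else 0 := by
    intro x y
    fin_cases x <;> fin_cases y <;>
      simp only [hM, Fin.sum_univ_four, Matrix.cons_val', Matrix.cons_val_zero,
        Matrix.cons_val_one, Matrix.head_cons, Matrix.cons_val_two, Matrix.tail_cons,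
        Matrix.cons_val_three, Matrix.head_fin_const, Fin.isValue, Fin.mk_zero, Fin.mk_one,
        Fin.reduceFinMk, if_true, if_false] <;>
      simp only [hC', transpose_mul, transpose_neg, Rt R hR, transpose_circ, rev_rev,
        rev_cnv, mul_neg, neg_mul, neg_neg, mul_one, one_mul, mul_assoc,
        R_mul_circ R hR, R_mul_circ' R hR, RR R hR, RR' R hR, circ_mul, circ_mul',
        cnv_comm, Fin.reduceEq, if_true, if_false, reduceIte]
    all_goals first
      | exact diag
      | (rw [← diag]; abel1)
      | abel1
  ext ⟨x, i⟩ ⟨y, k⟩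
  rw [mul_apply, Fintype.sum_prod_type]
  have step : ∀ c : Fin 4, (∑ j : ZMod v, H (x, i) (c, j) * Hᵀ (c, j) (y, k))
      = (M x c * (M y c)ᵀ) i k := by
    intro c
    rw [mul_apply]
    refine Finset.sum_congr rfl (fun j _ => ?_)
    rw [transpose_apply, hH, hH, transpose_apply]
  rw [Finset.sum_congr rfl fun c _ => step c, ← Matrix.sum_apply, key x y]
  by_cases hxy : x = y
  · subst hxy
    rw [if_pos rfl]
    by_cases hik : i = k <;>
      simp [Matrix.smul_apply, Matrix.one_apply, Prod.ext_iff, hik]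
  · rw [if_neg hxy]
    simp [Matrix.smul_apply, Matrix.one_apply, Prod.ext_iff, hxy]
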